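/- Let λ be the backward-in-time solution of the ODE λ'' = η/(4λ) with initial data λ(0) = sin ε > 0 and λ'(0) = cos ε > 0, where η > 0 and 0 < ε < π/2. Let -K = inf { t ≤ 0 : λ > 0 and λ' > 0 on (t, 0] }. Then -K is finite, λ(-K) > 0, and λ'(-K) = 0. -/

import Mathlib

/-- let `λ` solve `λ'' = η/(4λ)` backward in time with
`λ(0) = sin ε > 0`, `λ'(0) = cos ε > 0`, and let
`-K = inf { t ≤ 0 : λ > 0 and λ' > 0 on (t, 0] }`.  Then `-K` is finite
(the set is bounded below and `-K < 0`), `λ(-K) > 0`, and `λ'(-K) = 0`. -/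
theorem neck_ode_stops
    (η ε : ℝ) (hη : 0 < η) (hε : 0 < ε) (hε' : ε < Real.pi / 2)
    (lam : ℝ → ℝ) (hsm : ContDiff ℝ 2 lam)
    (h0 : lam 0 = Real.sin ε) (h0' : deriv lam 0 = Real.cos ε)
    (hode : ∀ t ≤ 0, 0 < lam t → deriv (deriv lam) t = η / (4 * lam t)) :
    BddBelow {t : ℝ | t ≤ 0 ∧ ∀ s ∈ Set.Ioc t 0, 0 < lam s ∧ 0 < deriv lam s} ∧
    sInf {t : ℝ | t ≤ 0 ∧ ∀ s ∈ Set.Ioc t 0, 0 < lam s ∧ 0 < deriv lam s} < 0 ∧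
    0 < lam (sInf {t : ℝ | t ≤ 0 ∧ ∀ s ∈ Set.Ioc t 0, 0 < lam s ∧ 0 < deriv lam s}) ∧
    deriv lam (sInf {t : ℝ | t ≤ 0 ∧ ∀ s ∈ Set.Ioc t 0, 0 < lam s ∧ 0 < deriv lam s}) = 0 := by
  set S : Set ℝ := {t : ℝ | t ≤ 0 ∧ ∀ s ∈ Set.Ioc t 0, 0 < lam s ∧ 0 < deriv lam s} with hSdef
  -- basic regularity
  have hcont : Continuous lam := hsm.continuous
  have hdiff : Differentiable ℝ lam := hsm.differentiable (by norm_num)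
  have h2 : ContDiff ℝ ((1:ℕ∞)+1) lam := by norm_num at hsm ⊢; exact hsm
  have h1 : ContDiff ℝ (1:ℕ∞) (deriv lam) := (contDiff_succ_iff_deriv.mp h2).2.2
  have hdiff' : Differentiable ℝ (deriv lam) := h1.differentiable (by norm_num)
  have hcont' : Continuous (deriv lam) := h1.continuous
  have hsin : 0 < Real.sin ε := Real.sin_pos_of_pos_of_lt_pi hε
    (lt_trans hε' (by linarith [Real.pi_pos]))
  have hcos : 0 < Real.cos ε := Real.cos_pos_of_mem_Ioo ⟨by linarith, hε'⟩
  have hlam0 : 0 < lam 0 := by rw [h0]; exact hsin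
  -- monotonicity of lam on subintervals of positivity
  have key_mono : ∀ t ∈ S, ∀ s ∈ Set.Ioc t 0, lam s ≤ Real.sin ε := by
    intro t ht s hs
    have hmono : MonotoneOn lam (Set.Icc s 0) := by
      apply monotoneOn_of_deriv_nonneg (convex_Icc s 0) hcont.continuousOn
        (hdiff.differentiableOn)
      intro x hx
      rw [interior_Icc] at hx
      exact le_of_lt (ht.2 x ⟨lt_trans hs.1 hx.1, le_of_lt hx.2⟩).2
    have := hmono ⟨le_refl s, hs.2⟩ ⟨hs.2, le_refl 0⟩ hs.2
    rwa [h0] at this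
  -- lower bound for the set S
  have hlow : ∀ t ∈ S, -(4 * Real.sin ε * Real.cos ε) / η ≤ t := by
    intro t ht
    by_contra hcon
    push_neg at hcon
    set B : ℝ := -(4 * Real.sin ε * Real.cos ε) / η with hBdef
    have hBneg : B < 0 := by
      apply div_neg_of_neg_of_pos _ hη
      nlinarith
    have hBmem : B ∈ Set.Ioc t 0 := ⟨hcon, le_of_lt hBneg⟩
    set c : ℝ := η / (4 * Real.sin ε) with hcdef
    have hcpos : 0 < c := div_pos hη (by linarith)
    -- g = deriv lam - c * id is monotone on [B, 0]
    have hg : MonotoneOn (fun x => deriv lam x - c * x) (Set.Icc B 0) := by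
      apply monotoneOn_of_deriv_nonneg (f := fun x => deriv lam x - c * x) (convex_Icc B 0)
        ((hcont'.sub (continuous_const.mul continuous_id')).continuousOn)
        ((hdiff'.sub (differentiable_id.const_mul c)).differentiableOn)
      intro x hx
      rw [interior_Icc] at hx
      have hxm : x ∈ Set.Ioc t 0 := ⟨lt_trans hcon hx.1, le_of_lt hx.2⟩
      have hpos := (ht.2 x hxm).1
      have hub := key_mono t ht x hxm
      have hder : deriv (fun x => deriv lam x - c * x) x = deriv (deriv lam) x - c := by
        have hda := ((hdiff' x).hasDerivAt.sub ((hasDerivAt_id' x).const_mul c)).deriv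
        simp at hda; exact hda
      rw [hder, hode x hxm.2 hpos]
      have : c ≤ η / (4 * lam x) := by
        rw [hcdef]
        apply div_le_div_of_nonneg_left (le_of_lt hη) (by linarith)
        linarith
      linarith
    have := hg ⟨le_refl B, le_of_lt hBneg⟩ ⟨le_of_lt hBneg, le_refl 0⟩ (le_of_lt hBneg)
    simp only [mul_zero, sub_zero, h0'] at this
    have hBval : c * B = -Real.cos ε := by
      rw [hcdef, hBdef]
      field_simp
    have hd := (ht.2 B hBmem).2
    nlinarith [this, hd]
  have hBdd : BddBelow S := ⟨-(4 * Real.sin ε * Real.cos ε) / η, hlow⟩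
  have h0S : (0:ℝ) ∈ S := ⟨le_refl 0, fun s hs => absurd hs.2 (not_le.mpr hs.1)⟩
  have hSne : S.Nonempty := ⟨0, h0S⟩
  -- the open set of positivity
  have hUopen : IsOpen {x : ℝ | 0 < lam x ∧ 0 < deriv lam x} :=
    (isOpen_lt continuous_const hcont).inter (isOpen_lt continuous_const hcont')
  -- sInf S < 0
  have hTneg : sInf S < 0 := by
    have h0U : (0:ℝ) ∈ {x : ℝ | 0 < lam x ∧ 0 < deriv lam x} := ⟨hlam0, by rw [h0']; exact hcos⟩
    obtain ⟨r, hr, hball⟩ := Metric.isOpen_iff.mp hUopen 0 h0U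
    have hmem : -(r/2) ∈ S := by
      refine ⟨by linarith, fun s hs => ?_⟩
      apply hball
      rw [Metric.mem_ball, Real.dist_eq, sub_zero, abs_lt]
      constructor <;> [linarith [hs.1]; linarith [hs.2]]
    calc sInf S ≤ -(r/2) := csInf_le hBdd hmem
    _ < 0 := by linarith
  set T : ℝ := sInf S with hTdef
  -- positivity on (T, 0]
  have hpos : ∀ s ∈ Set.Ioc T 0, 0 < lam s ∧ 0 < deriv lam s := by
    intro s hs
    obtain ⟨t, htS, hts⟩ := (csInf_lt_iff hBdd hSne).mp hs.1
    exact htS.2 s ⟨hts, hs.2⟩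
  have hTS : T ∈ S := ⟨le_of_lt hTneg, hpos⟩
  -- energy lower bound on lam
  set L : ℝ := Real.sin ε * Real.exp (-(2 * Real.cos ε ^ 2 / η)) with hLdef
  have hLpos : 0 < L := mul_pos hsin (Real.exp_pos _)
  have hlamlb : ∀ s ∈ Set.Ioc T 0, L ≤ lam s := by
    intro s hs
    set E : ℝ → ℝ := fun x => (deriv lam x)^2 - (η/2) * Real.log (lam x) with hEdef
    have hIcc : Set.Icc s 0 ⊆ Set.Ioc T 0 := fun x hx => ⟨lt_of_lt_of_le hs.1 hx.1, hx.2⟩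
    have hEderiv : ∀ x ∈ Set.Icc s 0, HasDerivAt E 0 x := by
      intro x hx
      have hxm := hIcc hx
      have hpx := (hpos x hxm).1
      have h1' : HasDerivAt (deriv lam) (deriv (deriv lam) x) x := (hdiff' x).hasDerivAt
      have h2' : HasDerivAt (fun y => (deriv lam y)^2)
          ((2:ℕ) * (deriv lam x) ^ 1 * deriv (deriv lam) x) x := h1'.pow 2
      have h3' : HasDerivAt (fun y => Real.log (lam y)) (deriv lam x / lam x) x :=
        ((hdiff x).hasDerivAt).log hpx.ne'
      have h4' := h2'.sub (h3'.const_mul (η/2))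
      have heq : (2:ℕ) * (deriv lam x) ^ 1 * deriv (deriv lam) x
          - (η/2) * (deriv lam x / lam x) = 0 := by
        rw [hode x hx.2 hpx]
        field_simp
        ring
      rw [heq] at h4'
      exact h4'
    have hEfix : E 0 = E s := by
      have hEcont : ContinuousOn E (Set.Icc s 0) := fun x hx =>
        ((hEderiv x hx).continuousAt).continuousWithinAt
      exact constant_of_has_deriv_right_zero hEcont
        (fun x hx => ((hEderiv x (Set.mem_Icc_of_Ico hx)).hasDerivWithinAt))
        0 ⟨hs.2, le_refl 0⟩
    have hps := (hpos s hs).1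
    have hE0 : E 0 = Real.cos ε ^ 2 - (η/2) * Real.log (Real.sin ε) := by
      rw [hEdef]; simp only []; rw [h0, h0']
    have hEs : E s = (deriv lam s)^2 - (η/2) * Real.log (lam s) := rfl
    have hlog : Real.log (Real.sin ε) - 2 * Real.cos ε ^ 2 / η ≤ Real.log (lam s) := by
      have h := hEfix
      rw [hE0, hEs] at h
      have key : η * (Real.log (Real.sin ε) - Real.log (lam s)) ≤ 2 * Real.cos ε ^ 2 := by
        nlinarith [sq_nonneg (deriv lam s)]
      have h7 : Real.log (Real.sin ε) - Real.log (lam s) ≤ 2 * Real.cos ε ^ 2 / η := by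
        rw [le_div_iff₀ hη, mul_comm]; exact key
      linarith
    calc L = Real.exp (Real.log (Real.sin ε) - 2 * Real.cos ε ^ 2 / η) := by
          rw [sub_eq_add_neg, Real.exp_add, Real.exp_log hsin]
    _ ≤ Real.exp (Real.log (lam s)) := Real.exp_le_exp.mpr hlog
    _ = lam s := Real.exp_log hps
  -- limits at T from the right
  have hnhds : Set.Ioc T 0 ∈ nhdsWithin T (Set.Ioi T) :=
    Ioc_mem_nhdsGT_of_mem ⟨le_refl T, hTneg⟩
  have hlamT : L ≤ lam T := by
    have htend : Filter.Tendsto lam (nhdsWithin T (Set.Ioi T)) (nhds (lam T)) :=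
      (hcont.continuousAt.tendsto).mono_left nhdsWithin_le_nhds
    exact ge_of_tendsto htend (Filter.eventually_of_mem hnhds (fun s hs => hlamlb s hs))
  have hlamTpos : 0 < lam T := lt_of_lt_of_le hLpos hlamT
  -- deriv lam T = 0
  have hTge : 0 ≤ deriv lam T := by
    have htend : Filter.Tendsto (deriv lam) (nhdsWithin T (Set.Ioi T)) (nhds (deriv lam T)) :=
      (hcont'.continuousAt.tendsto).mono_left nhdsWithin_le_nhds
    exact ge_of_tendsto htend
      (Filter.eventually_of_mem hnhds (fun s hs => le_of_lt (hpos s hs).2))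
  have hTle : ¬ (0 < deriv lam T) := by
    intro hlt
    have hTU : T ∈ {x : ℝ | 0 < lam x ∧ 0 < deriv lam x} := ⟨hlamTpos, hlt⟩
    obtain ⟨r, hr, hball⟩ := Metric.isOpen_iff.mp hUopen T hTU
    have hmem : T - r/2 ∈ S := by
      refine ⟨by linarith, fun s hs => ?_⟩
      rcases le_or_gt s T with hsle | hslt
      · apply hball
        rw [Metric.mem_ball, Real.dist_eq, abs_lt]
        constructor <;> [linarith [hs.1]; linarith]
      · exact hpos s ⟨hslt, hs.2⟩
    have := csInf_le hBdd hmem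
    rw [← hTdef] at this
    linarith
  exact ⟨hBdd, hTneg, hlamTpos, le_antisymm (not_lt.mp hTle) hTge⟩
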